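/- Let q ∈ (0,1), x0 ∈ ℝ, T : ℝ → ℝ, and T0, T1 : ℝ × ℝ → ℝ. Suppose T1 is (Fréchet) differentiable at (x0, x0) with partial derivatives T1x (with respect to the first argument) and T1y (with respect to the second argument), the function y ↦ T0(x0, y) is differentiable at x0 with derivative T0y, and T(x) = T1(x, x)/q for all x ∈ ℝ. Then T is differentiable at x0 and T'(x0) − (T1y/q − T0y/(1−q)) = T0y/(1−q) + T1x/q; that is, the bias of the naive local estimator equals T0y/(1−q) + T1x/q. -/

import Mathlib

open Filter Topology

/-- characterization of the bias of the naive local estimator. -/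
theorem bias_characterization
    (q x0 : ℝ) (hq0 : 0 < q) (hq1 : q < 1)
    (T : ℝ → ℝ) (T0 T1 : ℝ × ℝ → ℝ) (T0y T1x T1y : ℝ)
    (L : ℝ × ℝ →L[ℝ] ℝ)
    (hT1 : HasFDerivAt T1 L (x0, x0))
    (hT1x : L (1, 0) = T1x) (hT1y : L (0, 1) = T1y)
    (hT0 : HasDerivAt (fun y => T0 (x0, y)) T0y x0)
    (hT : ∀ x : ℝ, T x = T1 (x, x) / q) :
    DifferentiableAt ℝ T x0 ∧
      deriv T x0 - (T1y / q - T0y / (1 - q)) = T0y / (1 - q) + T1x / q := by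
  have hpair : HasDerivAt (fun x : ℝ => ((x, x) : ℝ × ℝ)) (1, 1) x0 :=
    HasDerivAt.prodMk (hasDerivAt_id x0) (hasDerivAt_id x0)
  have hg : HasDerivAt (fun x : ℝ => T1 (x, x)) (L (1, 1)) x0 :=
    HasFDerivAt.comp_hasDerivAt x0 (show HasFDerivAt T1 L ((fun x : ℝ => ((x,x):ℝ×ℝ)) x0) from hT1) hpair
  have hTd : HasDerivAt T (L (1, 1) / q) x0 := by
    have := hg.div_const q
    exact this.congr_of_eventuallyEq (Filter.Eventually.of_forall fun x => (hT x))
  refine ⟨hTd.differentiableAt, ?_⟩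
  rw [hTd.deriv]
  have h11 : L (1, 1) = T1x + T1y := by
    rw [← hT1x, ← hT1y, ← map_add]
    norm_num
  rw [h11]
  field_simp
  ring
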